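/- arXiv:1712.08958 — 2 statements merged into one kernel-verified Lean document; each statement's English description precedes it below -/
import Mathlib

section
/- Let h, K_H, γ, B*, β > 0, αΠ ≥ 0, set R₀ = (h + αΠ - β)/(γB*) and H* = (K_H/h)(R₀ - 1). Assume R₀ > 1. If 1 < 2/(γB*), then both eigenvalues h ± αΠ - (β + γB* + 2hH*/K_H) of the Jacobian are negative. -/
theorem endemic_eigenvalues_negative (h K γ Bstar β aPi : ℝ)
    (hh : 0 < h) (hK : 0 < K) (hγ : 0 < γ) (hB : 0 < Bstar) (hβ : 0 < β)
    (haPi : 0 ≤ aPi)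
    (hR0 : 1 < (h + aPi - β) / (γ * Bstar))
    (hcond : 1 < 2 / (γ * Bstar)) :
    let R₀ := (h + aPi - β) / (γ * Bstar)
    let Hstar := (K / h) * (R₀ - 1)
    h + aPi - (β + γ * Bstar + 2 * h * Hstar / K) < 0 ∧
      h - aPi - (β + γ * Bstar + 2 * h * Hstar / K) < 0 := by
  intro R₀ Hstar
  have hg : 0 < γ * Bstar := mul_pos hγ hB
  have hglt : γ * Bstar < 2 := by
    rw [lt_div_iff₀ hg] at hcond; linarith
  have hRg : γ * Bstar < h + aPi - β := by
    rw [lt_div_iff₀ hg] at hR0; linarith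
  have hH : 2 * h * Hstar / K = 2 * (R₀ - 1) := by
    field_simp [Hstar]
    have e : h * (K / h) = K := by field_simp
    simp only [Hstar]
    linear_combination (R₀ - 1) * e
  have hR0' : 1 < R₀ := hR0
  have hRdef : R₀ * (γ * Bstar) = h + aPi - β := by
    field_simp [R₀]
    rw [mul_assoc]; exact div_mul_cancel₀ _ hg.ne'
  constructor
  · rw [hH]; nlinarith
  · rw [hH]; nlinarith
end

section
/- Let b > d > 0, K_B > 0, μ > 0. Every solution B(t) of the ODE B' = bB(1 - B/K_B) + μ - dB with B(0) > 0 converges to B* = (K_B(b-d)/(2b))(1 + sqrt(1 + 4bμ/(K_B(b-d)²))) as t → ∞. -/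
open Filter Set Topology

lemma lower_barrier (B g : ℝ → ℝ) (hB : ∀ t, HasDerivAt B (g t) t) (m : ℝ)
    (hg : ∀ t, B t = m → 0 < g t) (h0 : m < B 0) : ∀ t, 0 ≤ t → m < B t := by
  intro t0 ht0
  by_contra hle
  push_neg at hle
  have hcont : Continuous B := continuous_iff_continuousAt.mpr fun t => (hB t).continuousAt
  set S : Set ℝ := {t ∈ Icc 0 t0 | B t = m} with hS
  have hSne : S.Nonempty := by
    obtain ⟨c, hc, hBc⟩ := intermediate_value_Icc' ht0 (hcont.continuousOn)
      (mem_Icc.mpr ⟨hle, le_of_lt h0⟩)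
    exact ⟨c, hc, hBc⟩
  have hSclosed : IsClosed S :=
    (isClosed_Icc).inter (isClosed_eq hcont continuous_const)
  have hSbdd : BddBelow S := ⟨0, fun x hx => hx.1.1⟩
  set τ := sInf S with hτ
  have hτS : τ ∈ S := hSclosed.csInf_mem hSne hSbdd
  have hBτ : B τ = m := hτS.2
  have hτpos : 0 < τ := lt_of_le_of_ne hτS.1.1 (by
    intro h; rw [← h] at hBτ; exact absurd hBτ.symm (ne_of_lt h0))
  have hpre : ∀ t, 0 ≤ t → t < τ → m < B t := by
    intro t ht htτ
    rcases lt_trichotomy (B t) m with h | h | h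
    · exfalso
      obtain ⟨c, hc, hBc⟩ := intermediate_value_Icc' ht (hcont.continuousOn)
        (mem_Icc.mpr ⟨le_of_lt h, le_of_lt h0⟩)
      have hcS : c ∈ S := ⟨⟨hc.1, hc.2.trans (htτ.le.trans hτS.1.2)⟩, hBc⟩
      exact absurd (csInf_le hSbdd hcS) (not_le.mpr (lt_of_le_of_lt hc.2 htτ))
    · exact absurd (csInf_le hSbdd ⟨⟨ht, (le_of_lt htτ).trans hτS.1.2⟩, h⟩)
        (not_le.mpr htτ)
    · exact h
  have hslope : Tendsto (slope B τ) (𝓝[≠] τ) (𝓝 (g τ)) :=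
    (hasDerivAt_iff_tendsto_slope).1 (hB τ)
  have hgτ : 0 < g τ := hg τ hBτ
  have h1 : ∀ᶠ x in 𝓝[<] τ, 0 < slope B τ x :=
    ((hslope.mono_left (nhdsWithin_mono τ fun x hx => ne_of_lt hx)).eventually
      (eventually_gt_nhds hgτ))
  have h2 : Ioo 0 τ ∈ 𝓝[<] τ := by
    rw [mem_nhdsLT_iff_exists_Ioo_subset]
    exact ⟨0, hτpos, fun x hx => hx⟩
  obtain ⟨x, hx1, hx2⟩ := (h1.and (eventually_of_mem h2 fun x hx => hx)).exists
  have hxτ : x < τ := hx2.2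
  have hBx : B x - B τ < 0 := by
    rw [slope_def_field] at hx1
    rcases div_pos_iff.mp hx1 with ⟨h4, h5⟩ | ⟨h4, h5⟩
    · linarith
    · linarith
  rw [hBτ] at hBx
  exact absurd (hpre x (le_of_lt hx2.1) hxτ) (not_lt.mpr (by linarith))

theorem bacteria_global_convergence (b d K μ : ℝ)
    (hbd : d < b) (hd : 0 < d) (hK : 0 < K) (hμ : 0 < μ)
    (B : ℝ → ℝ)
    (hODE : ∀ t : ℝ, HasDerivAt B (b * B t * (1 - B t / K) + μ - d * B t) t)
    (h0 : 0 < B 0) :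
    Filter.Tendsto B Filter.atTop
      (nhds ((K * (b - d) / (2 * b)) *
        (1 + Real.sqrt (1 + 4 * b * μ / (K * (b - d) ^ 2))))) := by
  have hb : 0 < b := hd.trans hbd
  have hbd' : (0:ℝ) < b - d := by linarith
  obtain ⟨s, hs⟩ : ∃ x, x = Real.sqrt (1 + 4 * b * μ / (K * (b - d) ^ 2)) := ⟨_, rfl⟩
  have hden : 0 < K * (b - d) ^ 2 := by positivity
  have harg : 0 < 1 + 4 * b * μ / (K * (b - d) ^ 2) := by
    have : 0 < 4 * b * μ / (K * (b - d) ^ 2) := div_pos (by positivity) hden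
    linarith
  have hs2 : s ^ 2 = 1 + 4 * b * μ / (K * (b - d) ^ 2) := by
    rw [hs]; exact Real.sq_sqrt harg.le
  have hs2' : K * (b - d) ^ 2 * s ^ 2 = K * (b - d) ^ 2 + 4 * b * μ := by
    rw [hs2]; field_simp
  have hs1 : 1 < s := by
    rw [hs]
    apply (Real.lt_sqrt (by norm_num)).mpr
    have : 0 < 4 * b * μ / (K * (b - d) ^ 2) := div_pos (by positivity) hden
    nlinarith
  obtain ⟨Bs, hBs⟩ : ∃ x, x = K * (b - d) / (2 * b) * (1 + s) := ⟨_, rfl⟩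
  have hA : 0 < K * (b - d) / (2 * b) := div_pos (by positivity) (by linarith)
  have hBspos : 0 < Bs := by rw [hBs]; exact mul_pos hA (by linarith)
  have key : b / K * Bs ^ 2 = (b - d) * Bs + μ := by
    rw [hBs]
    field_simp
    linear_combination hs2'
  have key' : b * Bs ^ 2 = K * (b - d) * Bs + K * μ := by
    have h := key
    field_simp at h
    linarith [h]
  obtain ⟨r, hr⟩ : ∃ x, x = K * (b - d) / b - Bs := ⟨_, rfl⟩
  have hrneg : r < 0 := by
    rw [hr, hBs]
    have h2 : K * (b - d) / b = K * (b - d) / (2 * b) * 2 := by field_simp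
    rw [h2]
    nlinarith [hA, hs1]
  have fact : ∀ x : ℝ, b * x * (1 - x / K) + μ - d * x = -(b / K) * (x - Bs) * (x - r) := by
    intro x
    rw [hr]
    field_simp
    linear_combination (-1) * key'
  -- lower barrier
  obtain ⟨m, hm⟩ : ∃ x, x = min (B 0) Bs / 2 := ⟨_, rfl⟩
  have hmpos : 0 < m := by
    rw [hm]; exact div_pos (lt_min h0 hBspos) (by norm_num)
  have hminpos : 0 < min (B 0) Bs := lt_min h0 hBspos
  have hm0 : m < B 0 := by
    have h2 := min_le_left (B 0) Bs
    rw [hm]; linarith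
  have hmBs : m < Bs := by
    have h2 := min_le_right (B 0) Bs
    rw [hm]; linarith
  have hbar : ∀ t, 0 ≤ t → m < B t := by
    apply lower_barrier B _ hODE m _ hm0
    intro t hBt
    rw [hBt, fact m]
    have hbK : 0 < b / K := div_pos hb hK
    have hp : 0 < b / K * (Bs - m) * (m - r) :=
      mul_pos (mul_pos hbK (by linarith)) (by linarith)
    nlinarith [hp]
  -- Lyapunov function W
  obtain ⟨c, hc⟩ : ∃ x, x = 2 * (b / K) * (m - r) := ⟨_, rfl⟩
  have hcpos : 0 < c := by
    have hbK : 0 < b / K := div_pos hb hK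
    rw [hc]
    exact mul_pos (mul_pos (by norm_num) hbK) (by linarith)
  obtain ⟨W, hW⟩ : ∃ W : ℝ → ℝ, W = fun t => Real.exp (c * t) * (B t - Bs) ^ 2 := ⟨_, rfl⟩
  have hWderiv : ∀ t, HasDerivAt W
      (c * Real.exp (c * t) * (B t - Bs) ^ 2 +
        Real.exp (c * t) * (2 * (B t - Bs) *
          (b * B t * (1 - B t / K) + μ - d * B t))) t := by
    intro t
    rw [hW]
    have h1 : HasDerivAt (fun t => Real.exp (c * t)) (c * Real.exp (c * t)) t := by
      have := (Real.hasDerivAt_exp (c * t)).comp t ((hasDerivAt_id t).const_mul c)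
      simpa [mul_comm, Function.comp_def] using this
    have h2 : HasDerivAt (fun t => (B t - Bs) ^ 2)
        (2 * (B t - Bs) * (b * B t * (1 - B t / K) + μ - d * B t)) t := by
      have := ((hODE t).sub_const Bs).fun_pow 2
      simpa [mul_comm, mul_assoc] using this
    exact h1.mul h2
  have hcont : Continuous B := continuous_iff_continuousAt.mpr fun t => (hODE t).continuousAt
  have hWanti : AntitoneOn W (Set.Ici 0) := by
    apply antitoneOn_of_deriv_nonpos (convex_Ici 0)
    · rw [hW]
      exact ((Real.continuous_exp.comp (continuous_const.mul continuous_id)).mul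
        ((hcont.sub continuous_const).pow 2)).continuousOn
    · intro t ht
      exact (hWderiv t).differentiableAt.differentiableWithinAt
    · intro t ht
      rw [interior_Ici] at ht
      rw [(hWderiv t).deriv, fact (B t)]
      have hmt : m < B t := hbar t (le_of_lt ht)
      have hbK : 0 < b / K := div_pos hb hK
      have heq : c * Real.exp (c * t) * (B t - Bs) ^ 2 +
          Real.exp (c * t) * (2 * (B t - Bs) * (-(b / K) * (B t - Bs) * (B t - r))) =
          (Real.exp (c * t) * (B t - Bs) ^ 2 * (2 * (b / K))) * (m - B t) := by
        rw [hc]; ring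
      rw [heq]
      exact mul_nonpos_of_nonneg_of_nonpos
        (mul_nonneg (mul_nonneg (Real.exp_pos (c * t)).le (sq_nonneg _))
          (by positivity)) (by linarith)
  have hbound : ∀ t, 0 ≤ t → (B t - Bs) ^ 2 ≤ (B 0 - Bs) ^ 2 * Real.exp (-(c * t)) := by
    intro t ht
    have hWt : W t ≤ W 0 := hWanti (mem_Ici.mpr le_rfl) (mem_Ici.mpr ht) ht
    rw [hW] at hWt
    simp only [mul_zero, Real.exp_zero, one_mul] at hWt
    have he : 0 < Real.exp (c * t) := Real.exp_pos _
    rw [Real.exp_neg]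
    calc (B t - Bs) ^ 2 = (Real.exp (c * t) * (B t - Bs) ^ 2) / Real.exp (c * t) := by
          field_simp
      _ ≤ (B 0 - Bs) ^ 2 / Real.exp (c * t) := by gcongr
      _ = (B 0 - Bs) ^ 2 * (Real.exp (c * t))⁻¹ := by rw [div_eq_mul_inv]
  have hexp : Tendsto (fun t : ℝ => (B 0 - Bs) ^ 2 * Real.exp (-(c * t))) atTop (𝓝 0) := by
    have h1 : Tendsto (fun t : ℝ => c * t) atTop atTop :=
      Tendsto.const_mul_atTop hcpos tendsto_id
    have h2 : Tendsto (fun t : ℝ => -(c * t)) atTop atBot :=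
      tendsto_neg_atTop_atBot.comp h1
    have h3 : Tendsto (fun t : ℝ => Real.exp (-(c * t))) atTop (𝓝 0) :=
      Real.tendsto_exp_atBot.comp h2
    simpa using h3.const_mul ((B 0 - Bs) ^ 2)
  have hsq : Tendsto (fun t => (B t - Bs) ^ 2) atTop (𝓝 0) := by
    apply tendsto_of_tendsto_of_tendsto_of_le_of_le' tendsto_const_nhds hexp
    · exact Eventually.of_forall fun t => sq_nonneg _
    · exact eventually_atTop.mpr ⟨0, hbound⟩
  have habs : Tendsto (fun t => |B t - Bs|) atTop (𝓝 0) := by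
    have h4 := (Real.continuous_sqrt.tendsto 0).comp hsq
    simpa [Function.comp_def, Real.sqrt_sq_eq_abs] using h4
  have hdiff : Tendsto (fun t => B t - Bs) atTop (𝓝 0) := by
    exact tendsto_of_tendsto_of_tendsto_of_le_of_le
      (by simpa using habs.neg) habs
      (fun t => neg_abs_le _) (fun t => le_abs_self _)
  have hfin : Tendsto B atTop (𝓝 Bs) := by
    have h5 := hdiff.add_const Bs
    simpa using h5
  rwa [hBs, hs] at hfin
end
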